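/- Let Y be a 0-dimensional Tychonoff space, A an uncountable index set, P and K compact subsets of Y × ℕ^A, and f : P → K a homeomorphism with π₁|P = π₁ ∘ f, where π₁ : Y × ℕ^A → Y is the projection. Then for every α ∈ A there is a countable f-admissible set B(α) ⊆ A containing α. -/

import Mathlib

open Topology Set

/-- A space is *0-dimensional* if it admits a dense topological embedding into a
compact Hausdorff totally disconnected space (a compactification of covering dimension 0). -/
def ZeroDimensional (Y : Type u) [TopologicalSpace Y] : Prop :=
  ∃ (Z : Type u) (_ : TopologicalSpace Z), CompactSpace Z ∧ T2Space Z ∧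
    TotallyDisconnectedSpace Z ∧ ∃ e : Y → Z, Topology.IsEmbedding e ∧ DenseRange e

/-- The natural projection `p_B : Y × ℕ^A → Y × ℕ^B` for `B ⊆ A`. -/
def projTo {Y : Type u} {A : Type v} (B : Set A) (z : Y × (A → ℕ)) : Y × (B → ℕ) :=
  (z.1, fun b => z.2 b)

/-- A set `B ⊆ A` is *`f`-admissible* if there is a homeomorphism
`f_B : P_B → K_B` (where `P_B = p_B(P)`, `K_B = p_B(K)`) such that
`(f_B ∘ p_B)|P = p_B ∘ f` and `_Bπ₁|P_B = _Bπ₁ ∘ f_B`. -/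
def FAdmissible {Y : Type u} {A : Type v} [TopologicalSpace Y]
    (P K : Set (Y × (A → ℕ))) (f : ↥P ≃ₜ ↥K) (B : Set A) : Prop :=
  ∃ fB : ↥(projTo B '' P) ≃ₜ ↥(projTo B '' K),
    (∀ p : P, (fB ⟨projTo B (p : Y × (A → ℕ)), mem_image_of_mem _ p.2⟩ : Y × (B → ℕ))
        = projTo B (f p : Y × (A → ℕ))) ∧
    (∀ q : ↥(projTo B '' P), ((fB q : Y × (B → ℕ)).1 = (q : Y × (B → ℕ)).1))

lemma sep {Y : Type u} {A : Type v} [TopologicalSpace Y] (hY : ZeroDimensional Y)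
    {C D : Set (Y × (A → ℕ))} (hC : IsCompact C) (hD : IsCompact D) (hCD : Disjoint C D) :
    ∃ B : Set A, B.Finite ∧ ∀ x ∈ C, ∀ y ∈ D, x.1 = y.1 → (∀ a ∈ B, x.2 a = y.2 a) → False := by
  obtain ⟨Z, _, hZc, hZ2, hZtd, e, he, -⟩ := hY
  haveI := hZc; haveI := hZ2; haveI := hZtd
  haveI : TotallySeparatedSpace Z := inferInstance
  have key : ∀ p : (Y × (A → ℕ)) × (Y × (A → ℕ)), p ∈ C ×ˢ D →
      ∃ (S : Set (Y × (A → ℕ))) (Ba : Set A), IsOpen S ∧ IsOpen Sᶜ ∧ p.1 ∈ S ∧ p.2 ∉ S ∧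
        Ba.Finite ∧ ∀ z w : Y × (A → ℕ), z.1 = w.1 → (∀ a ∈ Ba, z.2 a = w.2 a) →
          z ∈ S → w ∈ S := by
    rintro ⟨x, y⟩ ⟨hx, hy⟩
    by_cases h1 : x.1 = y.1
    · have hxy : x ≠ y := fun h => (hCD.ne_of_mem hx hy) h
      have h2 : x.2 ≠ y.2 := fun h => hxy (Prod.ext h1 h)
      obtain ⟨a, ha⟩ := Function.ne_iff.mp h2
      have hcont : Continuous fun z : Y × (A → ℕ) => z.2 a :=
        (continuous_apply a).comp continuous_snd
      refine ⟨{z | z.2 a = x.2 a}, {a}, ?_, ?_, rfl, fun h => ha h.symm, finite_singleton a, ?_⟩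
      · exact hcont.isOpen_preimage {x.2 a} (isOpen_discrete _)
      · exact hcont.isOpen_preimage {x.2 a}ᶜ (isOpen_discrete _)
      · intro z w hzw hag hz
        simpa [Set.mem_setOf_eq, ← hag a (mem_singleton a)] using hz
    · have hne : e x.1 ≠ e y.1 := fun h => h1 (he.injective h)
      obtain ⟨U, hU, hxU, hyU⟩ := exists_isClopen_of_totally_separated hne
      have hcont : Continuous fun z : Y × (A → ℕ) => e z.1 := he.continuous.comp continuous_fst
      refine ⟨(fun z : Y × (A → ℕ) => e z.1) ⁻¹' U, ∅, hU.2.preimage hcont,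
        hU.1.isOpen_compl.preimage hcont, hxU, hyU, finite_empty, ?_⟩
      intro z w hzw _ hz
      simpa [Set.mem_preimage, ← hzw] using hz
  choose S Ba hSo hSco hmem1 hmem2 hBfin hinv using key
  have hcov : C ×ˢ D ⊆ ⋃ i : ↥(C ×ˢ D), (S i.val i.property) ×ˢ (S i.val i.property)ᶜ := fun p hp =>
    mem_iUnion.mpr ⟨⟨p, hp⟩, hmem1 _ _, hmem2 _ _⟩
  obtain ⟨t, ht⟩ := (hC.prod hD).elim_finite_subcover
    (fun i : ↥(C ×ˢ D) => (S i.val i.property) ×ˢ (S i.val i.property)ᶜ)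
    (fun i => (hSo i.val i.property).prod (hSco i.val i.property)) hcov
  refine ⟨⋃ i ∈ t, Ba i.val i.property, t.finite_toSet.biUnion fun i _ => hBfin i.val i.property, ?_⟩
  intro x hx y hy h1 h2
  have : (x, y) ∈ ⋃ i ∈ t, (S i.val i.property) ×ˢ (S i.val i.property)ᶜ := ht ⟨hx, hy⟩
  obtain ⟨i, hit, hmem⟩ := mem_iUnion₂.mp this
  exact hmem.2 (hinv i.val i.property x y h1 (fun a ha => h2 a (mem_biUnion hit ha)) hmem.1)

lemma factor {Y : Type u} {A : Type v} [TopologicalSpace Y] (hY : ZeroDimensional Y)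
    {P : Set (Y × (A → ℕ))} (hP : IsCompact P) (g : ↥P → ℕ) (hg : Continuous g) :
    ∃ B : Set A, B.Finite ∧ ∀ x y : ↥P, (x : Y × (A → ℕ)).1 = (y : Y × (A → ℕ)).1 →
      (∀ a ∈ B, (x : Y × (A → ℕ)).2 a = (y : Y × (A → ℕ)).2 a) → g x = g y := by
  haveI : CompactSpace ↥P := isCompact_iff_compactSpace.mp hP
  have hfib : ∀ n : ℕ, IsCompact (Subtype.val '' (g ⁻¹' {n}) : Set (Y × (A → ℕ))) := fun n =>
    (((isClosed_discrete ({n} : Set ℕ)).preimage hg).isCompact).image continuous_subtype_val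
  have key : ∀ n m : ℕ, ∃ B : Set A, B.Finite ∧ (n ≠ m →
      ∀ x ∈ (Subtype.val '' (g ⁻¹' {n}) : Set (Y × (A → ℕ))),
      ∀ y ∈ (Subtype.val '' (g ⁻¹' {m}) : Set (Y × (A → ℕ))),
        x.1 = y.1 → (∀ a ∈ B, x.2 a = y.2 a) → False) := by
    intro n m
    by_cases h : n = m
    · exact ⟨∅, finite_empty, fun hnm => absurd h hnm⟩
    · have hdisj : Disjoint (Subtype.val '' (g ⁻¹' {n}) : Set (Y × (A → ℕ)))
          (Subtype.val '' (g ⁻¹' {m})) := by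
        rw [Set.disjoint_left]
        rintro z ⟨x, hx, rfl⟩ ⟨y, hy, hxy⟩
        have : y = x := Subtype.ext hxy
        subst this
        exact h (hx.symm.trans hy)
      obtain ⟨B, hBf, hB⟩ := sep hY (hfib n) (hfib m) hdisj
      exact ⟨B, hBf, fun _ => hB⟩
  choose Bnm hfin hsep using key
  have hrg : (Set.range g).Finite := (isCompact_range hg).finite DiscreteTopology.isDiscrete
  refine ⟨⋃ n ∈ Set.range g, ⋃ m ∈ Set.range g, Bnm n m,
    hrg.biUnion fun n _ => hrg.biUnion fun m _ => hfin n m, ?_⟩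
  intro x y h1 h2
  by_contra hne
  exact hsep (g x) (g y) hne x.val ⟨x, rfl, rfl⟩ y.val ⟨y, rfl, rfl⟩ h1
    (fun a ha => h2 a (mem_biUnion ⟨x, rfl⟩ (mem_biUnion ⟨y, rfl⟩ ha)))

lemma continuous_projTo {Y : Type u} {A : Type v} [TopologicalSpace Y] (B : Set A) :
    Continuous (projTo (Y := Y) B) :=
  continuous_fst.prodMk (continuous_pi fun b => (continuous_apply (b : A)).comp continuous_snd)

lemma projTo_eq_iff {Y : Type u} {A : Type v} {B : Set A} {x y : Y × (A → ℕ)} :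
    projTo B x = projTo B y ↔ x.1 = y.1 ∧ ∀ a ∈ B, x.2 a = y.2 a := by
  simp [projTo, Prod.ext_iff, funext_iff, Subtype.forall]


/-- **Lemma 2.2**: if `Y` is a 0-dimensional Tychonoff space, `A` is uncountable,
`P`, `K` are compact subsets of `Y × ℕ^A` and `f : P → K` is a homeomorphism with
`π₁|P = π₁ ∘ f`, then every `α ∈ A` belongs to some countable `f`-admissible set
`B(α) ⊆ A`. -/
theorem stmt3 {Y : Type u} [TopologicalSpace Y] [T35Space Y] (hY : ZeroDimensional Y)
    {A : Type v} [Uncountable A]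
    (P K : Set (Y × (A → ℕ))) (hP : IsCompact P) (hK : IsCompact K)
    (f : ↥P ≃ₜ ↥K) (hf : ∀ p : P, ((f p : Y × (A → ℕ)).1 = (p : Y × (A → ℕ)).1))
    (α : A) :
    ∃ B : Set A, B.Countable ∧ α ∈ B ∧ FAdmissible P K f B := by
  classical
  haveI : CompactSpace ↥P := isCompact_iff_compactSpace.mp hP
  haveI : CompactSpace ↥K := isCompact_iff_compactSpace.mp hK
  have hf' : ∀ q : K, ((f.symm q : Y × (A → ℕ)).1 = (q : Y × (A → ℕ)).1) := by
    intro q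
    have h := hf (f.symm q)
    rw [f.apply_symm_apply] at h; exact h.symm
  -- finite coordinate sets through which each coordinate of f (resp. f.symm) factors
  have hfa : ∀ a : A, ∃ B : Set A, B.Finite ∧ ∀ x y : ↥P,
      (x : Y × (A → ℕ)).1 = (y : Y × (A → ℕ)).1 →
      (∀ b ∈ B, (x : Y × (A → ℕ)).2 b = (y : Y × (A → ℕ)).2 b) →
      (f x : Y × (A → ℕ)).2 a = (f y : Y × (A → ℕ)).2 a := fun a =>
    factor hY hP (fun p => (f p : Y × (A → ℕ)).2 a)
      (((continuous_apply a).comp continuous_snd).comp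
        (continuous_subtype_val.comp f.continuous))
  have hba : ∀ a : A, ∃ B : Set A, B.Finite ∧ ∀ x y : ↥K,
      (x : Y × (A → ℕ)).1 = (y : Y × (A → ℕ)).1 →
      (∀ b ∈ B, (x : Y × (A → ℕ)).2 b = (y : Y × (A → ℕ)).2 b) →
      (f.symm x : Y × (A → ℕ)).2 a = (f.symm y : Y × (A → ℕ)).2 a := fun a =>
    factor hY hK (fun q => (f.symm q : Y × (A → ℕ)).2 a)
      (((continuous_apply a).comp continuous_snd).comp
        (continuous_subtype_val.comp f.symm.continuous))
  choose Bf hBfF hBf using hfa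
  choose Bb hBbF hBb using hba
  -- closing-off
  let Bn : ℕ → Set A := fun n => Nat.rec {α} (fun _ Bp => Bp ∪ ⋃ a ∈ Bp, (Bf a ∪ Bb a)) n
  have hBn0 : Bn 0 = {α} := rfl
  have hBnS : ∀ n, Bn (n + 1) = Bn n ∪ ⋃ a ∈ Bn n, (Bf a ∪ Bb a) := fun _ => rfl
  set B : Set A := ⋃ n, Bn n with hB
  have hcnt : ∀ n, (Bn n).Countable := by
    intro n
    induction n with
    | zero => exact countable_singleton α
    | succ n ih =>
      rw [hBnS]
      exact ih.union (ih.biUnion fun a _ => ((hBfF a).union (hBbF a)).countable)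
  have hBc : B.Countable := countable_iUnion hcnt
  have hαB : α ∈ B := mem_iUnion.mpr ⟨0, by rw [hBn0]; exact rfl⟩
  have hclose : ∀ a ∈ B, Bf a ⊆ B ∧ Bb a ⊆ B := by
    intro a ha
    obtain ⟨n, hn⟩ := mem_iUnion.mp ha
    constructor <;> intro b hb <;> refine mem_iUnion.mpr ⟨n + 1, ?_⟩ <;> rw [hBnS] <;>
      exact Or.inr (mem_biUnion hn (by first | exact Or.inl hb | exact Or.inr hb))
  -- key factorization over B
  have hfacP : ∀ x y : ↥P, projTo B (x : Y × (A → ℕ)) = projTo B (y : Y × (A → ℕ)) →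
      projTo B (f x : Y × (A → ℕ)) = projTo B (f y : Y × (A → ℕ)) := by
    intro x y h
    rw [projTo_eq_iff] at h ⊢
    refine ⟨by rw [hf x, hf y, h.1], fun a ha =>
      hBf a x y h.1 fun b hb => h.2 b ((hclose a ha).1 hb)⟩
  have hfacK : ∀ x y : ↥K, projTo B (x : Y × (A → ℕ)) = projTo B (y : Y × (A → ℕ)) →
      projTo B (f.symm x : Y × (A → ℕ)) = projTo B (f.symm y : Y × (A → ℕ)) := by
    intro x y h
    rw [projTo_eq_iff] at h ⊢
    refine ⟨by rw [hf' x, hf' y, h.1], fun a ha =>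
      hBb a x y h.1 fun b hb => h.2 b ((hclose a ha).2 hb)⟩
  -- choose preimages
  have hqP : ∀ q : ↥(projTo B '' P), ∃ x, x ∈ P ∧ projTo B x = (q : Y × (B → ℕ)) := fun q => q.2
  have hqK : ∀ q : ↥(projTo B '' K), ∃ x, x ∈ K ∧ projTo B x = (q : Y × (B → ℕ)) := fun q => q.2
  choose xP hxPm hxPe using hqP
  choose xK hxKm hxKe using hqK
  let toF : ↥(projTo B '' P) → ↥(projTo B '' K) := fun q =>
    ⟨projTo B (f ⟨xP q, hxPm q⟩ : Y × (A → ℕ)), mem_image_of_mem _ (f ⟨xP q, hxPm q⟩).2⟩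
  let invF : ↥(projTo B '' K) → ↥(projTo B '' P) := fun q =>
    ⟨projTo B (f.symm ⟨xK q, hxKm q⟩ : Y × (A → ℕ)),
      mem_image_of_mem _ (f.symm ⟨xK q, hxKm q⟩).2⟩
  have keyP : ∀ p : ↥P,
      (toF ⟨projTo B (p : Y × (A → ℕ)), mem_image_of_mem _ p.2⟩ : Y × (B → ℕ))
        = projTo B (f p : Y × (A → ℕ)) := by
    intro p
    exact hfacP ⟨xP _, hxPm _⟩ p (hxPe ⟨projTo B (p : Y × (A → ℕ)), mem_image_of_mem _ p.2⟩)
  have keyK : ∀ q : ↥K,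
      (invF ⟨projTo B (q : Y × (A → ℕ)), mem_image_of_mem _ q.2⟩ : Y × (B → ℕ))
        = projTo B (f.symm q : Y × (A → ℕ)) := by
    intro q
    exact hfacK ⟨xK _, hxKm _⟩ q (hxKe ⟨projTo B (q : Y × (A → ℕ)), mem_image_of_mem _ q.2⟩)
  have hli : Function.LeftInverse invF toF := by
    intro q
    have h1 : (toF q : Y × (B → ℕ)) = projTo B (f ⟨xP q, hxPm q⟩ : Y × (A → ℕ)) := rfl
    apply Subtype.ext
    have h2 := keyK (f ⟨xP q, hxPm q⟩)
    have h3 : toF q = ⟨projTo B ((f ⟨xP q, hxPm q⟩ : ↥K) : Y × (A → ℕ)),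
        mem_image_of_mem _ (f ⟨xP q, hxPm q⟩).2⟩ := rfl
    rw [h3, h2, f.symm_apply_apply]
    exact hxPe q
  have hri : Function.RightInverse invF toF := by
    intro q
    apply Subtype.ext
    have h2 := keyP (f.symm ⟨xK q, hxKm q⟩)
    have h3 : invF q = ⟨projTo B ((f.symm ⟨xK q, hxKm q⟩ : ↥P) : Y × (A → ℕ)),
        mem_image_of_mem _ (f.symm ⟨xK q, hxKm q⟩).2⟩ := rfl
    rw [h3, h2, f.apply_symm_apply]
    exact hxKe q
  -- continuity via quotient maps
  let πP : ↥P → ↥(projTo B '' P) := fun p =>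
    ⟨projTo B (p : Y × (A → ℕ)), mem_image_of_mem _ p.2⟩
  let πK : ↥K → ↥(projTo B '' K) := fun q =>
    ⟨projTo B (q : Y × (A → ℕ)), mem_image_of_mem _ q.2⟩
  have hπPc : Continuous πP :=
    Continuous.subtype_mk ((continuous_projTo B).comp continuous_subtype_val) _
  have hπKc : Continuous πK :=
    Continuous.subtype_mk ((continuous_projTo B).comp continuous_subtype_val) _
  have hπPs : Function.Surjective πP := fun q => ⟨⟨xP q, hxPm q⟩, Subtype.ext (hxPe q)⟩
  have hπKs : Function.Surjective πK := fun q => ⟨⟨xK q, hxKm q⟩, Subtype.ext (hxKe q)⟩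
  have hqmP : IsQuotientMap πP := IsQuotientMap.of_surjective_continuous hπPs hπPc
  have hqmK : IsQuotientMap πK := IsQuotientMap.of_surjective_continuous hπKs hπKc
  have hcontT : Continuous toF := by
    rw [hqmP.continuous_iff]
    have : toF ∘ πP = πK ∘ f := funext fun p => Subtype.ext (keyP p)
    rw [this]
    exact hπKc.comp f.continuous
  have hcontI : Continuous invF := by
    rw [hqmK.continuous_iff]
    have : invF ∘ πK = πP ∘ f.symm := funext fun q => Subtype.ext (keyK q)
    rw [this]
    exact hπPc.comp f.symm.continuous
  refine ⟨B, hBc, hαB, ⟨⟨toF, invF, hli, hri⟩, hcontT, hcontI⟩, keyP, ?_⟩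
  intro q
  show (projTo B (f ⟨xP q, hxPm q⟩ : Y × (A → ℕ))).1 = (q : Y × (B → ℕ)).1
  have h1 : (f ⟨xP q, hxPm q⟩ : Y × (A → ℕ)).1 = (xP q).1 := hf ⟨xP q, hxPm q⟩
  have h2 : (projTo B (xP q)).1 = (q : Y × (B → ℕ)).1 := congrArg Prod.fst (hxPe q)
  exact h1.trans h2
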